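/- Let r > a ≥ 1 be coprime integers and let d ≥ 2 be an integer. In the Laurent polynomial ring L = AddMonoidAlgebra ℂ (Fin 3 → ℤ) (Laurent polynomials over ℂ in three variables x, y, z), consider the four monomials A = x^{ad} z^{−1}, B = y^{rd−ad} z^{−1}, C = x^{−(ad−1)} y z, D = x y^{−(rd−ad−1)} z, i.e., the monomials with exponent vectors (ad, 0, −1), (0, rd−ad, −1), (1−ad, 1, 1), (1, ad+1−rd, 1). Then the ℂ-subalgebra of L generated by {A, B, C, D} is isomorphic as a ℂ-algebra to MvPolynomial (Fin 4) ℂ modulo the ideal generated by X·Z − Y·W (where X, Y, Z, W denote the four polynomial variables, sent to A, B, C, D respectively). -/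

import Mathlib

open MvPolynomial

private lemma inj_aux (p q : ℤ) (hq : 0 < q) (n0 n1 n2 n3 m0 m1 m2 m3 : ℕ)
    (hn : n0 = 0 ∨ n2 = 0) (hm : m0 = 0 ∨ m2 = 0)
    (E1 : p*n0 + (1-p)*n2 + n3 = p*m0 + (1-p)*m2 + m3)
    (E2 : (q-p)*n1 + n2 + (p+1-q)*n3 = (q-p)*m1 + m2 + (p+1-q)*m3)
    (E3 : -(n0:ℤ) - n1 + n2 + n3 = -(m0:ℤ) - m1 + m2 + m3) :
    n0 = m0 ∧ n1 = m1 ∧ n2 = m2 ∧ n3 = m3 := by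
  have h0 : q * (((n0:ℤ) - m0) - ((n2:ℤ) - m2)) = 0 := by
    linear_combination E1 - E2 - (q - p) * E3
  have ht0 : (n0:ℤ) - m0 = (n2:ℤ) - m2 := by
    rcases mul_eq_zero.mp h0 with h | h
    · omega
    · linarith
  have hs : (n2:ℤ) + n3 = (m2:ℤ) + m3 := by linear_combination E1 - p * ht0
  omega

private noncomputable def mon4 (i j k l : ℕ) : MvPolynomial (Fin 4) ℂ :=
  X 0 ^ i * X 1 ^ j * X 2 ^ k * X 3 ^ l

private lemma monomial_eq_mon4 (n : Fin 4 →₀ ℕ) (c : ℂ) :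
    (monomial n c : MvPolynomial (Fin 4) ℂ) = c • mon4 (n 0) (n 1) (n 2) (n 3) := by
  rw [monomial_eq, smul_eq_C_mul, mon4]
  congr 1
  rw [Finsupp.prod_fintype _ _ (fun i => pow_zero _), Fin.prod_univ_four]

private lemma aeval_mon4 (vA vB vC vD : Fin 3 → ℤ) (i j k l : ℕ) :
    aeval ![AddMonoidAlgebra.single vA (1:ℂ), AddMonoidAlgebra.single vB 1,
      AddMonoidAlgebra.single vC 1, AddMonoidAlgebra.single vD 1] (mon4 i j k l)
      = AddMonoidAlgebra.single (i • vA + j • vB + k • vC + l • vD) 1 := by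
  simp only [mon4, map_mul, map_pow, aeval_X, Matrix.cons_val_zero, Matrix.cons_val_one,
    Matrix.head_cons, Matrix.cons_val_two, Matrix.tail_cons, Matrix.cons_val_three]
  simp [AddMonoidAlgebra.single_pow, AddMonoidAlgebra.single_mul_single, add_assoc]

private def NFT := {v : Fin 4 → ℕ // v 0 = 0 ∨ v 2 = 0}

private noncomputable def wNF (t : NFT) : MvPolynomial (Fin 4) ℂ :=
  mon4 (t.1 0) (t.1 1) (t.1 2) (t.1 3)

private def expNF (vA vB vC vD : Fin 3 → ℤ) (t : NFT) : Fin 3 → ℤ :=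
  t.1 0 • vA + t.1 1 • vB + t.1 2 • vC + t.1 3 • vD

private lemma key (vA vB vC vD : Fin 3 → ℤ)
    (hrel : vA + vC = vB + vD)
    (hinj : Function.Injective (expNF vA vB vC vD)) (f : MvPolynomial (Fin 4) ℂ)
    (hf : aeval ![AddMonoidAlgebra.single vA (1:ℂ), AddMonoidAlgebra.single vB 1,
      AddMonoidAlgebra.single vC 1, AddMonoidAlgebra.single vD 1] f = 0) :
    f ∈ Ideal.span {(X 0 * X 2 - X 1 * X 3 : MvPolynomial (Fin 4) ℂ)} := by
  set F : Fin 4 → AddMonoidAlgebra ℂ (Fin 3 → ℤ) :=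
    ![AddMonoidAlgebra.single vA (1:ℂ), AddMonoidAlgebra.single vB 1,
      AddMonoidAlgebra.single vC 1, AddMonoidAlgebra.single vD 1] with hF
  set I : Ideal (MvPolynomial (Fin 4) ℂ) :=
    Ideal.span {(X 0 * X 2 - X 1 * X 3 : MvPolynomial (Fin 4) ℂ)} with hI
  -- easy direction: I is in the kernel
  have hone : aeval (R := ℂ) F (X 0 * X 2 - X 1 * X 3) = 0 := by
    rw [map_sub, map_mul, map_mul, aeval_X, aeval_X, aeval_X, aeval_X]
    show AddMonoidAlgebra.single vA 1 * AddMonoidAlgebra.single vC 1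
        - AddMonoidAlgebra.single vB 1 * AddMonoidAlgebra.single vD 1 = 0
    rw [AddMonoidAlgebra.single_mul_single, AddMonoidAlgebra.single_mul_single, hrel, sub_self]
  have hker : ∀ g ∈ I, aeval (R := ℂ) F g = 0 := by
    intro g hg
    have hle : I ≤ RingHom.ker (aeval (R := ℂ) F : MvPolynomial (Fin 4) ℂ →ₐ[ℂ] _) := by
      rw [hI, Ideal.span_le, Set.singleton_subset_iff]
      exact hone
    exact hle hg
  -- completeness of normal forms
  have hmonS : ∀ i j k l : ℕ,
      mon4 i j k l ∈ Submodule.span ℂ (Set.range wNF) ⊔ Submodule.restrictScalars ℂ I := by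
    intro i
    induction i with
    | zero =>
      intro j k l
      apply Submodule.mem_sup_left
      apply Submodule.subset_span
      exact ⟨⟨![0, j, k, l], Or.inl rfl⟩, by simp [wNF]⟩
    | succ i ih =>
      intro j k l
      match k with
      | 0 =>
        apply Submodule.mem_sup_left
        apply Submodule.subset_span
        exact ⟨⟨![i+1, j, 0, l], Or.inr rfl⟩, by simp [wNF]⟩
      | k + 1 =>
        have hrw : mon4 (i+1) j (k+1) l
            = mon4 i (j+1) k (l+1) + mon4 i j k l * (X 0 * X 2 - X 1 * X 3) := by
          simp only [mon4]; ring
        rw [hrw]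
        refine add_mem (ih (j+1) k (l+1)) (Submodule.mem_sup_right ?_)
        exact (Submodule.restrictScalars_mem ℂ I _).mpr
          (Ideal.mul_mem_left I _ (Ideal.subset_span rfl))
  have hcomplete : ∀ g : MvPolynomial (Fin 4) ℂ,
      g ∈ Submodule.span ℂ (Set.range wNF) ⊔ Submodule.restrictScalars ℂ I := by
    intro g
    induction g using MvPolynomial.induction_on' with
    | monomial n c =>
      rw [monomial_eq_mon4]
      exact Submodule.smul_mem _ _ (hmonS (n 0) (n 1) (n 2) (n 3))
    | add p q hp hq => exact add_mem hp hq
  -- linear independence of images of normal forms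
  have li0 := Module.Basis.linearIndependent (Finsupp.basisSingleOne (R := ℂ) (ι := Fin 3 → ℤ))
  rw [Finsupp.coe_basisSingleOne] at li0
  have li := li0.comp (expNF vA vB vC vD) hinj
  -- decompose f
  obtain ⟨s, hs, t, ht, hst⟩ := Submodule.mem_sup.mp (hcomplete f)
  have hts : aeval (R := ℂ) F s = 0 := by
    have h1 : aeval (R := ℂ) F t = 0 := hker t ((Submodule.restrictScalars_mem ℂ I t).mp ht)
    have h2 := congrArg (aeval (R := ℂ) F) hst
    rw [map_add, h1, add_zero] at h2
    rw [h2, hf]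
  obtain ⟨c, hc⟩ := Finsupp.mem_span_range_iff_exists_finsupp.mp hs
  have h2 : (c.sum fun u a => a • (AddMonoidAlgebra.single (expNF vA vB vC vD u) (1:ℂ))) = 0 := by
    have h3 : aeval (R := ℂ) F (c.sum fun u a => a • wNF u) = 0 := by rw [hc]; exact hts
    rw [map_finsuppSum] at h3
    have h4 : ∀ u : NFT, aeval (R := ℂ) F (wNF u) = AddMonoidAlgebra.single (expNF vA vB vC vD u) 1 :=
      fun u => aeval_mon4 vA vB vC vD _ _ _ _
    simpa [map_smul, h4] using h3
  have hc0 : c = 0 := by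
    refine linearIndependent_iff.mp li c ?_
    rw [Finsupp.linearCombination_apply]
    apply AddMonoidAlgebra.ofCoeff_injective
    simpa [AddMonoidAlgebra.ofCoeff_finsuppSum, AddMonoidAlgebra.ofCoeff_smul,
      AddMonoidAlgebra.ofCoeff_single] using h2
  have hs0 : s = 0 := by rw [← hc, hc0, Finsupp.sum_zero_index]
  have hft : f = t := by rw [← hst, hs0, zero_add]
  rw [hft]
  exact (Submodule.restrictScalars_mem ℂ I t).mp ht

theorem stmt_6 (r a d : ℕ) (ha : 1 ≤ a) (har : a < r) (hd : 2 ≤ d)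
    (hcop : Nat.Coprime r a)
    (A B C D : AddMonoidAlgebra ℂ (Fin 3 → ℤ))
    (hA : A = AddMonoidAlgebra.single ![(a * d : ℤ), 0, -1] 1)
    (hB : B = AddMonoidAlgebra.single ![0, (r * d : ℤ) - a * d, -1] 1)
    (hC : C = AddMonoidAlgebra.single ![1 - (a * d : ℤ), 1, 1] 1)
    (hD : D = AddMonoidAlgebra.single ![1, (a * d : ℤ) + 1 - r * d, 1] 1) :
    ∃ e : (MvPolynomial (Fin 4) ℂ ⧸
        Ideal.span {(X 0 * X 2 - X 1 * X 3 : MvPolynomial (Fin 4) ℂ)}) ≃ₐ[ℂ]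
        Algebra.adjoin ℂ ({A, B, C, D} : Set (AddMonoidAlgebra ℂ (Fin 3 → ℤ))),
      (e (Ideal.Quotient.mk _ (X 0)) : AddMonoidAlgebra ℂ (Fin 3 → ℤ)) = A ∧
      (e (Ideal.Quotient.mk _ (X 1)) : AddMonoidAlgebra ℂ (Fin 3 → ℤ)) = B ∧
      (e (Ideal.Quotient.mk _ (X 2)) : AddMonoidAlgebra ℂ (Fin 3 → ℤ)) = C ∧
      (e (Ideal.Quotient.mk _ (X 3)) : AddMonoidAlgebra ℂ (Fin 3 → ℤ)) = D := by
  set vA : Fin 3 → ℤ := ![(a * d : ℤ), 0, -1] with hvA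
  set vB : Fin 3 → ℤ := ![0, (r * d : ℤ) - a * d, -1] with hvB
  set vC : Fin 3 → ℤ := ![1 - (a * d : ℤ), 1, 1] with hvC
  set vD : Fin 3 → ℤ := ![1, (a * d : ℤ) + 1 - r * d, 1] with hvD
  have hq : (0:ℤ) < (r:ℤ) * d := by
    have hr : 0 < r := lt_of_le_of_lt (Nat.zero_le a) har
    have hd' : 0 < d := lt_of_lt_of_le (by norm_num) hd
    positivity
  have hrel : vA + vC = vB + vD := by
    funext i
    fin_cases i <;>
      simp [hvA, hvB, hvC, hvD] <;> ring
  have hinj : Function.Injective (expNF vA vB vC vD) := by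
    rintro ⟨n, hn⟩ ⟨m, hm⟩ h
    have h0 := congrFun h 0
    have h1 := congrFun h 1
    have h2 := congrFun h 2
    simp only [expNF, Pi.add_apply, Pi.smul_apply] at h0 h1 h2
    simp only [hvA, hvB, hvC, hvD, Matrix.cons_val_zero, Matrix.cons_val_one, Matrix.head_cons,
      Matrix.cons_val_two, Matrix.tail_cons, smul_eq_mul, nsmul_eq_mul] at h0 h1 h2
    obtain ⟨e0, e1, e2, e3⟩ :=
      inj_aux ((a:ℤ) * d) ((r:ℤ) * d) hq (n 0) (n 1) (n 2) (n 3) (m 0) (m 1) (m 2) (m 3)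
        hn hm (by linear_combination h0) (by linear_combination h1) (by linear_combination h2)
    refine Subtype.ext (funext fun i => ?_)
    fin_cases i <;> assumption
  -- the algebra map
  have hφone : aeval (R := ℂ) ![A, B, C, D] (X 0 * X 2 - X 1 * X 3) = 0 := by
    rw [map_sub, map_mul, map_mul, aeval_X, aeval_X, aeval_X, aeval_X]
    show A * C - B * D = 0
    rw [hA, hB, hC, hD, AddMonoidAlgebra.single_mul_single,
      AddMonoidAlgebra.single_mul_single, hrel, sub_self]
  set I : Ideal (MvPolynomial (Fin 4) ℂ) :=
    Ideal.span {(X 0 * X 2 - X 1 * X 3 : MvPolynomial (Fin 4) ℂ)} with hI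
  have hkerI : ∀ g ∈ I, aeval (R := ℂ) ![A, B, C, D] g = 0 := by
    intro g hg
    have hle : I ≤ RingHom.ker (aeval (R := ℂ) ![A, B, C, D] :
        MvPolynomial (Fin 4) ℂ →ₐ[ℂ] AddMonoidAlgebra ℂ (Fin 3 → ℤ)) := by
      rw [hI, Ideal.span_le, Set.singleton_subset_iff]
      exact hφone
    exact hle hg
  have hrange : Algebra.adjoin ℂ ({A, B, C, D} : Set (AddMonoidAlgebra ℂ (Fin 3 → ℤ)))
      = (aeval (R := ℂ) ![A, B, C, D]).range := by
    have hset : ({A, B, C, D} : Set (AddMonoidAlgebra ℂ (Fin 3 → ℤ)))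
        = Set.range ![A, B, C, D] := by
      ext x
      simp only [Matrix.range_cons, Matrix.range_empty, Set.union_empty, Set.mem_union,
        Set.mem_singleton_iff, Set.mem_insert_iff]
    rw [hset, Algebra.adjoin_range_eq_range_aeval]
  have hmem : ∀ x : MvPolynomial (Fin 4) ℂ, aeval (R := ℂ) ![A, B, C, D] x ∈
      Algebra.adjoin ℂ ({A, B, C, D} : Set (AddMonoidAlgebra ℂ (Fin 3 → ℤ))) := by
    intro x
    rw [hrange]
    exact ⟨x, rfl⟩
  set ψ : MvPolynomial (Fin 4) ℂ →ₐ[ℂ]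
      Algebra.adjoin ℂ ({A, B, C, D} : Set (AddMonoidAlgebra ℂ (Fin 3 → ℤ))) :=
    (aeval (R := ℂ) ![A, B, C, D]).codRestrict _ hmem with hψ
  have hker2 : ∀ g ∈ I, ψ g = 0 := by
    intro g hg
    apply Subtype.ext
    rw [hψ, AlgHom.coe_codRestrict]
    exact hkerI g hg
  set ψ' := Ideal.Quotient.liftₐ I ψ hker2 with hψ'
  have hlift : ∀ x, ψ' (Ideal.Quotient.mk I x) = ψ x := by
    intro x
    rw [hψ', Ideal.Quotient.liftₐ_apply]
    rfl
  have hbij : Function.Bijective ψ' := by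
    constructor
    · rw [injective_iff_map_eq_zero]
      intro u hu
      obtain ⟨x, rfl⟩ := Ideal.Quotient.mk_surjective u
      rw [hlift] at hu
      have hφx : aeval (R := ℂ) ![A, B, C, D] x = 0 := congrArg Subtype.val hu
      rw [hA, hB, hC, hD] at hφx
      have hxI := key vA vB vC vD hrel hinj x hφx
      exact Ideal.Quotient.eq_zero_iff_mem.mpr hxI
    · intro y
      obtain ⟨x, hx⟩ := (AlgHom.mem_range _).mp (hrange.le y.2)
      exact ⟨Ideal.Quotient.mk I x, by rw [hlift]; exact Subtype.ext hx⟩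
  refine ⟨AlgEquiv.ofBijective ψ' hbij, ?_, ?_, ?_, ?_⟩ <;>
  · show ((ψ' (Ideal.Quotient.mk I _) : Algebra.adjoin ℂ _) :
      AddMonoidAlgebra ℂ (Fin 3 → ℤ)) = _
    rw [hlift]
    show aeval (R := ℂ) ![A, B, C, D] (X _) = _
    rw [aeval_X]
    simp
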